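/- arXiv:1401.4614 — 2 statements merged into one kernel-verified Lean document; each statement's English description precedes it below -/
import Mathlib

section
/- Let L_1,L_2 be functions regularly varying at infinity with indices β_1,β_2∈ℝ respectively, and let Z_1,Z_2 be independent real random variables with P(e^{Z_i}>u) ~ L_i(u)Ψ(log u) as u→∞ for i=1,2, and let σ_1,σ_2>0. Then for every a>0, P(e^{σ_1Z_1+σ_2Z_2}>u, e^{σ_2Z_2}≤a) / P(e^{σ_1Z_1+σ_2Z_2}>u, e^{σ_2Z_2}>a) → 0 as u→∞, and likewise P(e^{σ_1Z_1+σ_2Z_2}>u, e^{σ_1Z_1}≤a) / P(e^{σ_1Z_1+σ_2Z_2}>u, e^{σ_1Z_1}>a) → 0 as u→∞. -/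
open MeasureTheory ProbabilityTheory Filter Real Set

/-- Survival function of the standard normal distribution: `Ψ x = P(Z > x)` for `Z ~ N(0,1)`. -/
noncomputable def stdGaussianSurvival (x : ℝ) : ℝ :=
  ((gaussianReal 0 1) (Set.Ioi x)).toReal

/-- `L` is regularly varying at infinity with index `β`. -/
def RegVary (L : ℝ → ℝ) (β : ℝ) : Prop :=
  ∀ l : ℝ, 0 < l → Tendsto (fun u => L (l * u) / L u) atTop (nhds (l ^ β))

/-- Asymptotic equivalence at infinity: `f u / g u → 1` as `u → ∞`. -/
def AsymEquiv (f g : ℝ → ℝ) : Prop :=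
  Tendsto (fun u => f u / g u) atTop (nhds 1)

lemma stdGaussianSurvival_eq (x : ℝ) :
    stdGaussianSurvival x = ∫ t in Set.Ioi x, gaussianPDFReal 0 1 t := by
  rw [stdGaussianSurvival, gaussianReal_apply_eq_integral 0 one_ne_zero,
    ENNReal.toReal_ofReal
      (setIntegral_nonneg measurableSet_Ioi fun t _ => gaussianPDFReal_nonneg 0 1 t)]

lemma stdGaussianSurvival_pos (x : ℝ) : 0 < stdGaussianSurvival x := by
  rw [stdGaussianSurvival_eq]
  rw [setIntegral_pos_iff_support_of_nonneg_ae
    (ae_of_all _ fun t => gaussianPDFReal_nonneg 0 1 t)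
    (integrable_gaussianPDFReal 0 1).integrableOn]
  have hs : Function.support (gaussianPDFReal 0 1) = Set.univ := by
    ext t; simp [(gaussianPDFReal_pos 0 1 t one_ne_zero).ne']
  rw [hs, Set.univ_inter]
  simp [Real.volume_Ioi]

lemma stdGaussianSurvival_le (x δ : ℝ) (hx : 0 ≤ x) (hδ : 0 ≤ δ) :
    stdGaussianSurvival (x + δ) ≤ exp (-(x*δ)) * stdGaussianSurvival x := by
  rw [stdGaussianSurvival_eq, stdGaussianSurvival_eq]
  have h1 : (∫ t in Set.Ioi (x+δ), gaussianPDFReal 0 1 t)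
      = ∫ t in Set.Ioi x, gaussianPDFReal 0 1 (t + δ) := by
    rw [← (measurePreserving_add_right volume δ).setIntegral_preimage_emb
      (measurableEmbedding_addRight δ)]
    congr 1
    ext t
    simp
  rw [h1, ← integral_const_mul]
  refine setIntegral_mono_on ?_ ?_ measurableSet_Ioi ?_
  · exact ((integrable_gaussianPDFReal 0 1).comp_add_right δ).integrableOn
  · exact ((integrable_gaussianPDFReal 0 1).integrableOn).const_mul _
  · intro t ht
    simp only [gaussianPDFReal, NNReal.coe_one, mul_one, sub_zero] at *
    rw [mul_comm (rexp _), mul_assoc]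
    refine mul_le_mul_of_nonneg_left ?_ (by positivity)
    rw [← Real.exp_add, Real.exp_le_exp]
    have := mem_Ioi.mp ht
    nlinarith

lemma gauss_ratio_tendsto {δ : ℝ} (hδ : 0 < δ) :
    Tendsto (fun x => stdGaussianSurvival (x + δ) / stdGaussianSurvival x) atTop (nhds 0) := by
  have hex : Tendsto (fun x : ℝ => exp (-(x*δ))) atTop (nhds 0) := by
    apply Real.tendsto_exp_atBot.comp
    exact tendsto_neg_atTop_atBot.comp (tendsto_id.atTop_mul_const hδ)
  refine squeeze_zero' ?_ ?_ hex
  · exact Eventually.of_forall fun x =>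
      div_nonneg (stdGaussianSurvival_pos _).le (stdGaussianSurvival_pos _).le
  · filter_upwards [eventually_ge_atTop (0:ℝ)] with x hx
    rw [div_le_iff₀ (stdGaussianSurvival_pos x)]
    calc stdGaussianSurvival (x + δ) ≤ exp (-(x*δ)) * stdGaussianSurvival x :=
      stdGaussianSurvival_le x δ hx hδ.le
    _ = _ := by ring

lemma tail_pos {Ω : Type*} [MeasurableSpace Ω] (P : Measure Ω) [IsProbabilityMeasure P]
    (L : ℝ → ℝ) (hLpos : ∀ u > (0:ℝ), 0 < L u) (Z : Ω → ℝ)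
    (hZ : AsymEquiv (fun u => (P {ω | u < exp (Z ω)}).toReal)
      (fun u => L u * stdGaussianSurvival (log u))) :
    ∀ v : ℝ, 0 < (P {ω | v < exp (Z ω)}).toReal := by
  intro v
  have h1 : ∀ᶠ u in atTop, (1/2 : ℝ) <
      (P {ω | u < exp (Z ω)}).toReal / (L u * stdGaussianSurvival (log u)) :=
    hZ.eventually (eventually_gt_nhds (by norm_num))
  obtain ⟨u, hu, huv⟩ := (h1.and (eventually_gt_atTop (max v 0))).exists
  have hupos : (0:ℝ) < u := lt_of_le_of_lt (le_max_right v 0) huv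
  have hden : 0 < L u * stdGaussianSurvival (log u) :=
    mul_pos (hLpos u hupos) (stdGaussianSurvival_pos _)
  have hnum : 0 < (P {ω | u < exp (Z ω)}).toReal := by
    have := (lt_div_iff₀ hden).mp hu
    nlinarith
  refine lt_of_lt_of_le hnum (ENNReal.toReal_mono (measure_ne_top P _) (measure_mono ?_))
  intro ω hω
  exact lt_trans (lt_of_le_of_lt (le_max_left v 0) huv) hω

lemma aux_negligible {Ω : Type*} [MeasurableSpace Ω] (P : Measure Ω) [IsProbabilityMeasure P]
    (L : ℝ → ℝ) (β : ℝ) (hLpos : ∀ u > (0:ℝ), 0 < L u) (hL : RegVary L β)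
    (X Y : Ω → ℝ) (hind : IndepFun X Y P)
    (hXtail : AsymEquiv (fun u => (P {ω | u < exp (X ω)}).toReal)
      (fun u => L u * stdGaussianSurvival (log u)))
    (hXpos : ∀ v : ℝ, 0 < (P {ω | v < exp (X ω)}).toReal)
    (hYpos : ∀ v : ℝ, 0 < (P {ω | v < exp (Y ω)}).toReal)
    (σ τ : ℝ) (hσ : 0 < σ) (hτ : 0 < τ) (a : ℝ) (ha : 0 < a) :
    Tendsto (fun u =>
      (P {ω | u < exp (σ * X ω + τ * Y ω) ∧ exp (τ * Y ω) ≤ a}).toReal /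
      (P {ω | u < exp (σ * X ω + τ * Y ω) ∧ a < exp (τ * Y ω)}).toReal) atTop (nhds 0) := by
  set b : ℝ := 2 * a with hb_def
  have hab : a < b := by rw [hb_def]; linarith
  have hb : 0 < b := by rw [hb_def]; linarith
  set δ : ℝ := (log b - log a) / σ with hδ_def
  have hδ : 0 < δ := div_pos (sub_pos.mpr (Real.log_lt_log ha hab)) hσ
  set g : ℝ → ℝ := fun v => (P {ω | v < exp (X ω)}).toReal with hg_def
  set x : ℝ → ℝ := fun u => (log u - log b) / σ with hx_def
  set c : ℝ := (P {ω | exp (log b / τ) < exp (Y ω)}).toReal with hc_def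
  have hc : 0 < c := hYpos _
  -- numerator bound
  have hnum : ∀ u : ℝ, 0 < u →
      (P {ω | u < exp (σ * X ω + τ * Y ω) ∧ exp (τ * Y ω) ≤ a}).toReal
        ≤ g (exp (x u + δ)) := by
    intro u hu
    refine ENNReal.toReal_mono (measure_ne_top P _) (measure_mono ?_)
    rintro ω ⟨h1, h2⟩
    show exp (x u + δ) < exp (X ω)
    rw [Real.exp_lt_exp]
    have hlu : log u < σ * X ω + τ * Y ω := by
      have := Real.log_lt_log hu h1
      rwa [Real.log_exp] at this
    have hY2 : τ * Y ω ≤ log a := by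
      have := Real.log_le_log (Real.exp_pos _) h2
      rwa [Real.log_exp] at this
    have key : log u - log a < σ * X ω := by linarith
    rw [hx_def, hδ_def, ← add_div, div_lt_iff₀ hσ]
    nlinarith [key]
  -- denominator bound
  have hden : ∀ u : ℝ, 0 < u →
      g (exp (x u)) * c ≤
      (P {ω | u < exp (σ * X ω + τ * Y ω) ∧ a < exp (τ * Y ω)}).toReal := by
    intro u hu
    have hinter : P ({ω | exp (x u) < exp (X ω)} ∩ {ω | exp (log b / τ) < exp (Y ω)})
        = P {ω | exp (x u) < exp (X ω)} * P {ω | exp (log b / τ) < exp (Y ω)} := by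
      exact hind.measure_inter_preimage_eq_mul (s := {t : ℝ | exp (x u) < exp t})
        (t := {t : ℝ | exp (log b / τ) < exp t})
        (measurable_exp measurableSet_Ioi) (measurable_exp measurableSet_Ioi)
    have step : g (exp (x u)) * c
        = (P ({ω | exp (x u) < exp (X ω)} ∩ {ω | exp (log b / τ) < exp (Y ω)})).toReal := by
      rw [hinter, ENNReal.toReal_mul]
    rw [step]
    refine ENNReal.toReal_mono (measure_ne_top P _) (measure_mono ?_)
    rintro ω ⟨h1, h2⟩
    have hX1 : log u - log b < σ * X ω := by
      have := Real.exp_lt_exp.mp h1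
      rw [hx_def] at this
      have := (div_lt_iff₀ hσ).mp this
      nlinarith [this]
    have hY1 : log b < τ * Y ω := by
      have := Real.exp_lt_exp.mp h2
      have := (div_lt_iff₀ hτ).mp this
      nlinarith [this]
    constructor
    · have : log u < σ * X ω + τ * Y ω := by linarith
      calc u = exp (log u) := (Real.exp_log hu).symm
        _ < _ := Real.exp_lt_exp.mpr this
    · calc a < b := hab
        _ = exp (log b) := (Real.exp_log hb).symm
        _ < _ := Real.exp_lt_exp.mpr hY1
  -- limits
  have hxtop : Tendsto x atTop atTop := by
    rw [hx_def]
    exact Tendsto.atTop_div_const hσ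
      (tendsto_atTop_add_const_right _ _ Real.tendsto_log_atTop)
  have hv2top : Tendsto (fun u => exp (x u)) atTop atTop := Real.tendsto_exp_atTop.comp hxtop
  have hv1top : Tendsto (fun u => exp (x u + δ)) atTop atTop :=
    Real.tendsto_exp_atTop.comp (tendsto_atTop_add_const_right _ _ hxtop)
  have f1 : Tendsto (fun u =>
      g (exp (x u + δ)) / (L (exp (x u + δ)) * stdGaussianSurvival (x u + δ)))
      atTop (nhds 1) := by
    have := hXtail.comp hv1top
    simpa [Function.comp_def, Real.log_exp] using this
  have f4' : Tendsto (fun u =>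
      g (exp (x u)) / (L (exp (x u)) * stdGaussianSurvival (x u)))
      atTop (nhds 1) := by
    have := hXtail.comp hv2top
    simpa [Function.comp_def, Real.log_exp] using this
  have f4 : Tendsto (fun u =>
      (L (exp (x u)) * stdGaussianSurvival (x u)) / g (exp (x u)))
      atTop (nhds 1) := by
    have := f4'.inv₀ one_ne_zero
    rw [inv_one] at this
    refine this.congr fun u => ?_
    rw [inv_div]
  have fL : Tendsto (fun u => L (exp δ * exp (x u)) / L (exp (x u)))
      atTop (nhds (exp δ ^ β)) := (hL (exp δ) (Real.exp_pos δ)).comp hv2top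
  have fΨ : Tendsto (fun u => stdGaussianSurvival (x u + δ) / stdGaussianSurvival (x u))
      atTop (nhds 0) := (gauss_ratio_tendsto hδ).comp hxtop
  have combined := (f1.mul (fL.mul fΨ)).mul f4
  rw [show (1:ℝ) * (exp δ ^ β * 0) * 1 = 0 by ring] at combined
  have core : Tendsto (fun u => g (exp (x u + δ)) / g (exp (x u))) atTop (nhds 0) := by
    refine combined.congr fun u => ?_
    rw [show exp δ * exp (x u) = exp (x u + δ) by rw [← Real.exp_add]; ring_nf]
    have hA1 : L (exp (x u + δ)) ≠ 0 := (hLpos _ (Real.exp_pos _)).ne'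
    have hA2 : L (exp (x u)) ≠ 0 := (hLpos _ (Real.exp_pos _)).ne'
    have hP1 : stdGaussianSurvival (x u + δ) ≠ 0 := (stdGaussianSurvival_pos _).ne'
    have hP2 : stdGaussianSurvival (x u) ≠ 0 := (stdGaussianSurvival_pos _).ne'
    have hT2 : g (exp (x u)) ≠ 0 := (hXpos _).ne'
    field_simp
    try ring
  have hbnd : Tendsto (fun u => g (exp (x u + δ)) / (g (exp (x u)) * c)) atTop (nhds 0) := by
    simpa only [div_div, zero_div] using core.div_const c
  refine squeeze_zero' ?_ ?_ hbnd
  · exact Eventually.of_forall fun u => div_nonneg ENNReal.toReal_nonneg ENNReal.toReal_nonneg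
  · filter_upwards [eventually_gt_atTop (0:ℝ)] with u hu
    exact div_le_div₀ (hXpos _).le (hnum u hu) (mul_pos (hXpos _) hc) (hden u hu)

/-- Equation (12) and its companion: the contribution where one factor stays bounded
is negligible. -/
theorem product_lognormal_small_factor_negligible
    {Ω : Type*} [MeasurableSpace Ω] (P : Measure Ω) [IsProbabilityMeasure P]
    (L₁ L₂ : ℝ → ℝ) (β₁ β₂ : ℝ)
    (hL₁pos : ∀ u > (0 : ℝ), 0 < L₁ u) (hL₂pos : ∀ u > (0 : ℝ), 0 < L₂ u)
    (hL₁ : RegVary L₁ β₁) (hL₂ : RegVary L₂ β₂)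
    (Z₁ Z₂ : Ω → ℝ) (hZ₁meas : Measurable Z₁) (hZ₂meas : Measurable Z₂)
    (hindep : IndepFun Z₁ Z₂ P)
    (hZ₁ : AsymEquiv (fun u => (P {ω | u < exp (Z₁ ω)}).toReal)
      (fun u => L₁ u * stdGaussianSurvival (log u)))
    (hZ₂ : AsymEquiv (fun u => (P {ω | u < exp (Z₂ ω)}).toReal)
      (fun u => L₂ u * stdGaussianSurvival (log u)))
    (σ₁ σ₂ : ℝ) (hσ₁ : 0 < σ₁) (hσ₂ : 0 < σ₂) :
    ∀ a > (0 : ℝ),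
      Tendsto (fun u =>
        (P {ω | u < exp (σ₁ * Z₁ ω + σ₂ * Z₂ ω) ∧ exp (σ₂ * Z₂ ω) ≤ a}).toReal /
        (P {ω | u < exp (σ₁ * Z₁ ω + σ₂ * Z₂ ω) ∧ a < exp (σ₂ * Z₂ ω)}).toReal)
        atTop (nhds 0) ∧
      Tendsto (fun u =>
        (P {ω | u < exp (σ₁ * Z₁ ω + σ₂ * Z₂ ω) ∧ exp (σ₁ * Z₁ ω) ≤ a}).toReal /
        (P {ω | u < exp (σ₁ * Z₁ ω + σ₂ * Z₂ ω) ∧ a < exp (σ₁ * Z₁ ω)}).toReal)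
        atTop (nhds 0) := by
  intro a ha
  have hZ₁pos := tail_pos P L₁ hL₁pos Z₁ hZ₁
  have hZ₂pos := tail_pos P L₂ hL₂pos Z₂ hZ₂
  constructor
  · exact aux_negligible P L₁ β₁ hL₁pos hL₁ Z₁ Z₂ hindep hZ₁ hZ₁pos hZ₂pos σ₁ σ₂ hσ₁ hσ₂ a ha
  · have := aux_negligible P L₂ β₂ hL₂pos hL₂ Z₂ Z₁ hindep.symm hZ₂ hZ₂pos hZ₁pos
      σ₂ σ₁ hσ₂ hσ₁ a ha
    simpa only [show ∀ ω, σ₂ * Z₂ ω + σ₁ * Z₁ ω = σ₁ * Z₁ ω + σ₂ * Z₂ ω from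
      fun ω => add_comm _ _] using this
end

section
/- Let δ>0 and let N be a nonnegative integer-valued random variable with E[(1+δ)^N]<∞ and P(N≥1)>0. Let ρ∈[0,1) and let Z_0,Z_1,Z_2,… be independent real random variables, independent of N, such that P(e^{Z_0}>u) ~ L(u)Ψ(log u) as u→∞ for some function L regularly varying at infinity with index β∈ℝ, and such that there exist constants c_i∈[0,∞) with sup_{i≥1}c_i<∞ and sup_{i≥1}|P(Z_i>u)/P(Z_0>u)−c_i|→0 as u→∞, and assume Θ:=E[Σ_{i=1}^N c_i]∈(0,∞). Then the random maximum W_N^*=max_{1≤i≤N} e^{√(1−ρ²)·Z_i} (equal to 0 when N=0) satisfies P(W_N^*>u) ~ Θ·P(e^{√(1−ρ²)·Z_0}>u) as u→∞. -/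
open MeasureTheory ProbabilityTheory Filter Real Set

lemma aux_one_sub_sum_le_prod (s : Finset ℕ) (p : ℕ → ℝ) (h0 : ∀ i ∈ s, 0 ≤ p i)
    (h1 : ∀ i ∈ s, p i ≤ 1) :
    1 - ∑ i ∈ s, p i ≤ ∏ i ∈ s, (1 - p i) := by
  classical
  induction s using Finset.induction with
  | empty => simp
  | @insert a s' hx ih =>
    rw [Finset.sum_insert hx, Finset.prod_insert hx]
    have ha : p a ≤ 1 := h1 a (Finset.mem_insert_self a s')
    have ha0 : 0 ≤ p a := h0 a (Finset.mem_insert_self a s')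
    have ihs := ih (fun i hi => h0 i (Finset.mem_insert_of_mem hi))
      (fun i hi => h1 i (Finset.mem_insert_of_mem hi))
    have hS0 : 0 ≤ ∑ i ∈ s', p i :=
      Finset.sum_nonneg fun i hi => h0 i (Finset.mem_insert_of_mem hi)
    nlinarith [ihs, ha, ha0, hS0]

lemma aux_prod_nonneg_le_one (s : Finset ℕ) (p : ℕ → ℝ) (h0 : ∀ i ∈ s, 0 ≤ p i)
    (h1 : ∀ i ∈ s, p i ≤ 1) :
    0 ≤ ∏ i ∈ s, (1 - p i) ∧ ∏ i ∈ s, (1 - p i) ≤ 1 := by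
  constructor
  · exact Finset.prod_nonneg fun i hi => by linarith [h1 i hi]
  · exact Finset.prod_le_one (fun i hi => by linarith [h1 i hi]) (fun i hi => by linarith [h0 i hi])

lemma aux_prod_le_one_sub_sum_add_sq (s : Finset ℕ) (p : ℕ → ℝ) (h0 : ∀ i ∈ s, 0 ≤ p i)
    (h1 : ∀ i ∈ s, p i ≤ 1) :
    ∏ i ∈ s, (1 - p i) ≤ 1 - (∑ i ∈ s, p i) + (∑ i ∈ s, p i) ^ 2 := by
  classical
  induction s using Finset.induction with
  | empty => simp
  | @insert a s' hx ih =>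
    rw [Finset.sum_insert hx, Finset.prod_insert hx]
    have ha0 : 0 ≤ p a := h0 a (Finset.mem_insert_self a s')
    have ha1 : p a ≤ 1 := h1 a (Finset.mem_insert_self a s')
    have ihs := ih (fun i hi => h0 i (Finset.mem_insert_of_mem hi))
      (fun i hi => h1 i (Finset.mem_insert_of_mem hi))
    have hS0 : 0 ≤ ∑ i ∈ s', p i :=
      Finset.sum_nonneg fun i hi => h0 i (Finset.mem_insert_of_mem hi)
    nlinarith [ihs, ha0, ha1, hS0]

lemma aux_lt_finsetSup_iff (s : Finset ℕ) (f : ℕ → ℝ) {u : ℝ} (hu : 0 < u) :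
    u < (⨆ i ∈ s, f i) ↔ ∃ i ∈ s, u < f i := by
  classical
  have hbdd : BddAbove (range fun i => ⨆ (_ : i ∈ s), f i) := by
    apply Set.Finite.bddAbove
    have : (range fun i => ⨆ (_ : i ∈ s), f i) ⊆ insert 0 (f '' s) := by
      rintro x ⟨i, rfl⟩
      by_cases hi : i ∈ s
      · right; refine ⟨i, hi, ?_⟩; exact (ciSup_pos (f := fun _ => f i) hi).symm
      · left
        haveI : IsEmpty (i ∈ s) := ⟨hi⟩
        simp [Real.iSup_of_isEmpty]
    exact (((s : Set ℕ).toFinite.image f).insert 0).subset this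
  rw [lt_ciSup_iff hbdd]
  constructor
  · rintro ⟨i, hi⟩
    by_cases h : i ∈ s
    · exact ⟨i, h, by rwa [ciSup_pos h] at hi⟩
    · haveI : IsEmpty (i ∈ s) := ⟨h⟩
      rw [Real.iSup_of_isEmpty] at hi
      exact absurd hi (not_lt.2 hu.le)
  · rintro ⟨i, hi, h⟩
    exact ⟨i, by rwa [ciSup_pos hi]⟩

lemma aux_tail_tendsto {Ω : Type*} [MeasurableSpace Ω] (P : Measure Ω) [IsProbabilityMeasure P]
    (X : Ω → ℝ) (hX : Measurable X) :
    Tendsto (fun t : ℝ => (P {ω | t < X ω}).toReal) atTop (nhds 0) := by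
  have h1 : Tendsto (fun t : ℝ => P {ω | t < X ω}) atTop (nhds (P (⋂ t : ℝ, {ω | t < X ω}))) := by
    apply tendsto_measure_iInter_atTop
    · exact fun t => (measurableSet_lt measurable_const hX).nullMeasurableSet
    · exact fun t s hts ω h => lt_of_le_of_lt hts h
    · exact ⟨0, measure_ne_top P _⟩
  have h2 : (⋂ t : ℝ, {ω | t < X ω}) = ∅ := by
    ext ω
    simp only [Set.mem_iInter, Set.mem_setOf_eq, Set.mem_empty_iff_false, iff_false, not_forall,
      not_lt]
    exact ⟨X ω, le_refl _⟩
  rw [h2, measure_empty] at h1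
  have := (ENNReal.tendsto_toReal (by simp : (0:ENNReal) ≠ ⊤)).comp h1
  simpa [Function.comp_def] using this

lemma aux_integral_eq_tsum {Ω : Type*} [MeasurableSpace Ω] (P : Measure Ω) [IsProbabilityMeasure P]
    (N : Ω → ℕ) (hN : Measurable N) (g : ℕ → ℝ) (hg0 : ∀ n, 0 ≤ g n)
    (hint : Integrable (fun ω => g (N ω)) P) :
    Summable (fun n => (P {ω | N ω = n}).toReal * g n) ∧
      ∫ ω, g (N ω) ∂P = ∑' n, (P {ω | N ω = n}).toReal * g n := by
  have hgm : Measurable g := measurable_from_top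
  have hmap : ∀ n, (P.map N) {n} = P {ω | N ω = n} := by
    intro n
    rw [Measure.map_apply hN (measurableSet_singleton n)]
    rfl
  have hintg : Integrable g (P.map N) := by
    rw [integrable_map_measure hgm.aestronglyMeasurable hN.aemeasurable]
    exact hint
  have hInt : ∫ ω, g (N ω) ∂P = ∑' n, (P {ω | N ω = n}).toReal * g n := by
    rw [← integral_map hN.aemeasurable hgm.aestronglyMeasurable, integral_countable' hintg]
    exact tsum_congr fun n => by rw [measureReal_def, hmap n, smul_eq_mul]
  refine ⟨?_, hInt⟩
  have hfin : ∑' n, ((‖g n‖₊ : ENNReal) * (P.map N) {n}) ≠ ⊤ := by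
    have := hintg.2
    rw [HasFiniteIntegral, lintegral_countable'] at this
    exact this.ne
  have hsum := ENNReal.summable_toReal hfin
  apply hsum.congr
  intro n
  rw [ENNReal.toReal_mul, hmap n, mul_comm]
  congr 1
  simp [Real.norm_eq_abs, abs_of_nonneg (hg0 n)]

lemma aux_decomp {Ω : Type*} [MeasurableSpace Ω] (P : Measure Ω) [IsProbabilityMeasure P]
    (N : Ω → ℕ) (hN : Measurable N)
    (Z : ℕ → Ω → ℝ) (hZ : ∀ i, Measurable (Z i))
    (hZindep : iIndepFun Z P)
    (hNZ : IndepFun N (fun ω => fun i => Z i ω) P)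
    (t : ℝ) :
    (P {ω | ∃ i ∈ Finset.Icc 1 (N ω), t < Z i ω}).toReal
      = ∑' n, (P {ω | N ω = n}).toReal *
          (1 - ∏ i ∈ Finset.Icc 1 n, (1 - (P {ω | t < Z i ω}).toReal)) := by
  classical
  set A : ℕ → Set Ω := fun n => {ω | ∃ i ∈ Finset.Icc 1 n, t < Z i ω} with hA
  -- A n as a preimage under the vector map
  set T : ℕ → Set (ℕ → ℝ) := fun n => ⋃ i ∈ Finset.Icc 1 n, (fun f : ℕ → ℝ => f i) ⁻¹' (Set.Ioi t)
    with hT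
  have hTmeas : ∀ n, MeasurableSet (T n) := fun n =>
    Finset.measurableSet_biUnion _ fun i _ => (measurable_pi_apply i) measurableSet_Ioi
  have hApre : ∀ n, A n = (fun ω => fun i => Z i ω) ⁻¹' T n := by
    intro n
    ext ω
    simp [hA, hT, Set.mem_iUnion]
  have hAmeas : ∀ n, MeasurableSet (A n) := by
    intro n
    rw [hApre n]
    exact (measurable_pi_lambda _ fun i => hZ i) (hTmeas n)
  -- decomposition of the event
  have hdecomp : {ω | ∃ i ∈ Finset.Icc 1 (N ω), t < Z i ω}
      = ⋃ n, ({ω | N ω = n} ∩ A n) := by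
    ext ω
    simp only [Set.mem_setOf_eq, Set.mem_iUnion, Set.mem_inter_iff, hA]
    constructor
    · intro h; exact ⟨N ω, rfl, h⟩
    · rintro ⟨n, rfl, h⟩; exact h
  have hNn : ∀ n, MeasurableSet {ω | N ω = n} := fun n => hN (measurableSet_singleton n)
  have hdisj : Pairwise (Function.onFun Disjoint fun n => {ω | N ω = n} ∩ A n) := by
    intro m n hmn
    refine Set.disjoint_left.2 ?_
    rintro ω ⟨hm, _⟩ ⟨hn, _⟩
    exact hmn (hm.symm.trans hn)
  have hmeasU : P {ω | ∃ i ∈ Finset.Icc 1 (N ω), t < Z i ω}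
      = ∑' n, P ({ω | N ω = n} ∩ A n) := by
    rw [hdecomp, measure_iUnion hdisj fun n => (hNn n).inter (hAmeas n)]
  -- independence of N and the Z-vector
  have hterm : ∀ n, P ({ω | N ω = n} ∩ A n) = P {ω | N ω = n} * P (A n) := by
    intro n
    have := hNZ.measure_inter_preimage_eq_mul {n} (T n) (measurableSet_singleton n) (hTmeas n)
    rw [hApre n]
    exact this
  -- product formula for P(A n)
  have hprod : ∀ n, (P (A n)).toReal
      = 1 - ∏ i ∈ Finset.Icc 1 n, (1 - (P {ω | t < Z i ω}).toReal) := by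
    intro n
    have hAc : (A n)ᶜ = ⋂ i ∈ Finset.Icc 1 n, Z i ⁻¹' (Set.Iic t) := by
      ext ω
      simp [hA, not_lt]
    have hcompl : P ((A n)ᶜ) = ∏ i ∈ Finset.Icc 1 n, P (Z i ⁻¹' (Set.Iic t)) := by
      rw [hAc]
      exact hZindep.measure_inter_preimage_eq_mul (Finset.Icc 1 n)
        (sets := fun _ => Set.Iic t) (fun i _ => measurableSet_Iic)
    have hone : (P (A n)).toReal + (P ((A n)ᶜ)).toReal = 1 := by
      rw [← ENNReal.toReal_add (measure_ne_top P _) (measure_ne_top P _),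
        measure_add_measure_compl (hAmeas n)]
      simp
    have hfac : ∀ i, (P (Z i ⁻¹' (Set.Iic t))).toReal = 1 - (P {ω | t < Z i ω}).toReal := by
      intro i
      have hc : (Z i ⁻¹' (Set.Iic t))ᶜ = {ω | t < Z i ω} := by
        ext ω; simp [not_le]
      have h1 : (P (Z i ⁻¹' (Set.Iic t))).toReal + (P {ω | t < Z i ω}).toReal = 1 := by
        rw [← hc, ← ENNReal.toReal_add (measure_ne_top P _) (measure_ne_top P _),
          measure_add_measure_compl (hZ i measurableSet_Iic)]
        simp
      linarith
    have hcompl' : (P ((A n)ᶜ)).toReal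
        = ∏ i ∈ Finset.Icc 1 n, (1 - (P {ω | t < Z i ω}).toReal) := by
      rw [hcompl, ENNReal.toReal_prod]
      exact Finset.prod_congr rfl fun i _ => hfac i
    linarith
  rw [hmeasU, ENNReal.tsum_toReal_eq fun n => by
    rw [hterm n]; exact ENNReal.mul_ne_top (measure_ne_top P _) (measure_ne_top P _)]
  exact tsum_congr fun n => by rw [hterm n, ENNReal.toReal_mul, hprod n]


set_option maxHeartbeats 2000000 in
/-- Step in the proof of Theorem 1: the random maximum `W_N^* = max_{1≤i≤N} e^{√(1-ρ²) Z_i}`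
of the independent parts satisfies `P(W_N^* > u) ~ Θ P(e^{√(1-ρ²) Z₀} > u)`. -/
theorem random_max_independent_part_tail
    {Ω : Type*} [MeasurableSpace Ω] (P : Measure Ω) [IsProbabilityMeasure P]
    (δ : ℝ) (hδ : 0 < δ)
    (N : Ω → ℕ) (hNmeas : Measurable N)
    (hNint : Integrable (fun ω => (1 + δ) ^ (N ω)) P)
    (hNpos : 0 < P {ω | 1 ≤ N ω})
    (ρ : ℝ) (hρ : ρ ∈ Set.Ico (0 : ℝ) 1)
    (Z : ℕ → Ω → ℝ) (hZmeas : ∀ i, Measurable (Z i))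
    (hZindep : iIndepFun Z P)
    (hNZ : IndepFun N (fun ω => fun i => Z i ω) P)
    (L : ℝ → ℝ) (β : ℝ) (hLpos : ∀ u > (0 : ℝ), 0 < L u) (hL : RegVary L β)
    (hZ0 : AsymEquiv (fun u => (P {ω | u < exp (Z 0 ω)}).toReal)
      (fun u => L u * stdGaussianSurvival (log u)))
    (c : ℕ → ℝ) (hc0 : ∀ i, 1 ≤ i → 0 ≤ c i)
    (M : ℝ) (hcM : ∀ i, 1 ≤ i → c i ≤ M)
    (hcu : ∀ ε > (0 : ℝ), ∀ᶠ u in atTop, ∀ i, 1 ≤ i →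
      |(P {ω | u < Z i ω}).toReal / (P {ω | u < Z 0 ω}).toReal - c i| < ε)
    (Θ : ℝ) (hΘint : Integrable (fun ω => ∑ i ∈ Finset.Icc 1 (N ω), c i) P)
    (hΘ : Θ = ∫ ω, ∑ i ∈ Finset.Icc 1 (N ω), c i ∂P)
    (hΘpos : 0 < Θ) :
    AsymEquiv
      (fun u => (P {ω | u < ⨆ i ∈ Finset.Icc 1 (N ω),
          exp (sqrt (1 - ρ ^ 2) * Z i ω)}).toReal)
      (fun u => Θ * (P {ω | u < exp (sqrt (1 - ρ ^ 2) * Z 0 ω)}).toReal) := by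
  classical
  obtain ⟨hρ0, hρ1⟩ := hρ
  set a : ℝ := sqrt (1 - ρ ^ 2) with ha_def
  have ha : 0 < a := Real.sqrt_pos.2 (by nlinarith)
  set q : ℕ → ℝ → ℝ := fun i t => (P {ω | t < Z i ω}).toReal with hq_def
  set w : ℕ → ℝ := fun n => (P {ω | N ω = n}).toReal with hw_def
  set C : ℕ → ℝ := fun n => ∑ i ∈ Finset.Icc 1 n, c i with hC_def
  have hw0 : ∀ n, 0 ≤ w n := fun n => ENNReal.toReal_nonneg
  have hqnn : ∀ i t, 0 ≤ q i t := fun i t => ENNReal.toReal_nonneg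
  have hq1 : ∀ i t, q i t ≤ 1 := fun i t => by
    have h := prob_le_one (μ := P) (s := {ω | t < Z i ω})
    have := ENNReal.toReal_mono ENNReal.one_ne_top h
    simpa using this
  have hM0 : 0 ≤ M := le_trans (hc0 1 le_rfl) (hcM 1 le_rfl)
  -- moment bounds
  obtain ⟨hsum_exp, -⟩ := aux_integral_eq_tsum P N hNmeas (fun n => (1 + δ) ^ n)
    (fun n => by positivity) hNint
  have hsumN : Summable (fun n => w n * n) := by
    refine Summable.of_nonneg_of_le (fun n => by positivity) (fun n => ?_)
      (hsum_exp.mul_right (1 / δ))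
    have hb : (n : ℝ) * δ ≤ (1 + δ) ^ n := by
      have := one_add_mul_le_pow (by linarith : (-2 : ℝ) ≤ δ) n
      linarith
    calc w n * n ≤ w n * ((1 + δ) ^ n / δ) := by
          refine mul_le_mul_of_nonneg_left ?_ (hw0 n)
          rw [le_div_iff₀ hδ]; exact hb
      _ = w n * (1 + δ) ^ n * (1 / δ) := by ring
  have hsumN2 : Summable (fun n => w n * (n : ℝ) ^ 2) := by
    set b : ℝ := Real.sqrt (1 + δ) with hb_def
    have hb1 : 1 < b := by
      rw [show (1 : ℝ) = Real.sqrt 1 by simp]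
      exact Real.sqrt_lt_sqrt (by norm_num) (by linarith)
    have hbsq : b ^ 2 = 1 + δ := Real.sq_sqrt (by linarith)
    have hkey : ∀ n : ℕ, (n : ℝ) ^ 2 * (b - 1) ^ 2 ≤ (1 + δ) ^ n := by
      intro n
      have h1 : (n : ℝ) * (b - 1) ≤ b ^ n := by
        have := one_add_mul_le_pow (by linarith : (-2 : ℝ) ≤ b - 1) n
        have h2 : (1 + (b - 1)) ^ n = b ^ n := by ring_nf
        nlinarith
      have h2 : (1 + δ) ^ n = (b ^ n) ^ 2 := by
        rw [← hbsq, ← pow_mul, ← pow_mul, Nat.mul_comm]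
      have hn0 : (0 : ℝ) ≤ (n : ℝ) * (b - 1) := mul_nonneg (Nat.cast_nonneg n) (by linarith)
      nlinarith
    refine Summable.of_nonneg_of_le (fun n => mul_nonneg (hw0 n) (by positivity)) (fun n => ?_)
      (hsum_exp.mul_right (1 / (b - 1) ^ 2))
    have hbpos : (0 : ℝ) < (b - 1) ^ 2 := by nlinarith
    calc w n * (n : ℝ) ^ 2 ≤ w n * ((1 + δ) ^ n / (b - 1) ^ 2) := by
          refine mul_le_mul_of_nonneg_left ?_ (hw0 n)
          rw [le_div_iff₀ hbpos]; exact hkey n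
      _ = w n * (1 + δ) ^ n * (1 / (b - 1) ^ 2) := by ring
  -- Θ as a sum
  have hC0 : ∀ n, 0 ≤ C n := fun n =>
    Finset.sum_nonneg fun i hi => hc0 i (Finset.mem_Icc.1 hi).1
  obtain ⟨hsumC, hΘsum⟩ := aux_integral_eq_tsum P N hNmeas C hC0 hΘint
  have hΘeq : Θ = ∑' n, w n * C n := by rw [hΘ]; exact hΘsum
  have hCle : ∀ n : ℕ, C n ≤ M * n := by
    intro n
    calc C n ≤ ∑ i ∈ Finset.Icc 1 n, M :=
          Finset.sum_le_sum fun i hi => hcM i (Finset.mem_Icc.1 hi).1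
      _ = M * n := by
          rw [Finset.sum_const, Nat.card_Icc]
          simp [mul_comm]
  -- positivity of the tail of Z 0 eventually
  have hq0pos : ∀ᶠ t in atTop, 0 < q 0 t := by
    have h12 : ∀ᶠ u in atTop,
        (1 : ℝ) / 2 < (P {ω | u < exp (Z 0 ω)}).toReal /
          (L u * stdGaussianSurvival (log u)) :=
      hZ0.eventually (eventually_gt_nhds (by norm_num))
    rw [eventually_atTop] at h12
    obtain ⟨U, hU⟩ := h12
    have hexp : Tendsto (fun t : ℝ => exp t) atTop atTop := Real.tendsto_exp_atTop
    filter_upwards [hexp.eventually (eventually_ge_atTop U)] with t ht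
    have hratio := hU (exp t) ht
    have hnum : 0 < (P {ω | exp t < exp (Z 0 ω)}).toReal := by
      by_contra h
      push_neg at h
      have h0 : (P {ω | exp t < exp (Z 0 ω)}).toReal = 0 :=
        le_antisymm h ENNReal.toReal_nonneg
      rw [h0] at hratio
      simp at hratio
      linarith
    have hsets : {ω | exp t < exp (Z 0 ω)} = {ω | t < Z 0 ω} := by
      ext ω; simp [Real.exp_lt_exp]
    rwa [hsets] at hnum
  have hq0to0 : Tendsto (fun t => q 0 t) atTop (nhds 0) :=
    aux_tail_tendsto P (Z 0) (hZmeas 0)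
  -- event identities
  have hsetexp : ∀ (i : ℕ) (u : ℝ), 0 < u →
      {ω | u < exp (a * Z i ω)} = {ω | log u / a < Z i ω} := by
    intro i u hu
    ext ω
    rw [Set.mem_setOf_eq, Set.mem_setOf_eq, ← Real.log_lt_iff_lt_exp hu, div_lt_iff₀ ha,
      mul_comm]
  have hp0eq : ∀ u : ℝ, 0 < u →
      (P {ω | u < exp (a * Z 0 ω)}).toReal = q 0 (log u / a) := by
    intro u hu
    rw [hsetexp 0 u hu]
  have hFeq : ∀ u : ℝ, 0 < u →
      (P {ω | u < ⨆ i ∈ Finset.Icc 1 (N ω), exp (a * Z i ω)}).toReal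
        = ∑' n, w n * (1 - ∏ i ∈ Finset.Icc 1 n, (1 - q i (log u / a))) := by
    intro u hu
    have hset : {ω | u < ⨆ i ∈ Finset.Icc 1 (N ω), exp (a * Z i ω)}
        = {ω | ∃ i ∈ Finset.Icc 1 (N ω), log u / a < Z i ω} := by
      ext ω
      rw [Set.mem_setOf_eq, Set.mem_setOf_eq, aux_lt_finsetSup_iff _ _ hu]
      refine exists_congr fun i => and_congr_right fun _ => ?_
      rw [← Real.log_lt_iff_lt_exp hu, div_lt_iff₀ ha, mul_comm]
    rw [hset]
    exact aux_decomp P N hNmeas Z hZmeas hZindep hNZ (log u / a)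
  -- the main limit
  have hmain : Tendsto (fun u => (P {ω | u < ⨆ i ∈ Finset.Icc 1 (N ω),
      exp (a * Z i ω)}).toReal / (P {ω | u < exp (a * Z 0 ω)}).toReal) atTop (nhds Θ) := by
    rw [Metric.tendsto_nhds]
    intro ε hε
    set KN : ℝ := ∑' n, w n * n with hKN_def
    set K2 : ℝ := ∑' n, w n * (n : ℝ) ^ 2 with hK2_def
    have hKN0 : 0 ≤ KN := tsum_nonneg fun n => by positivity
    have hK20 : 0 ≤ K2 := tsum_nonneg fun n => by positivity
    set ε1 : ℝ := min 1 (ε / (2 * (KN + 1))) with hε1_def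
    have hε1pos : 0 < ε1 := lt_min one_pos (by positivity)
    have hε1le1 : ε1 ≤ 1 := min_le_left _ _
    have hε1le : ε1 ≤ ε / (2 * (KN + 1)) := min_le_right _ _
    set εq : ℝ := ε / (2 * ((M + 1) ^ 2 * (K2 + 1))) with hεq_def
    have hεqpos : 0 < εq := by positivity
    have ht : Tendsto (fun u : ℝ => log u / a) atTop atTop :=
      Real.tendsto_log_atTop.atTop_div_const ha
    have hEt : ∀ᶠ t in atTop, (∀ i, 1 ≤ i → |q i t / q 0 t - c i| < ε1)
        ∧ 0 < q 0 t ∧ q 0 t < εq :=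
      (hcu ε1 hε1pos).and (hq0pos.and (hq0to0.eventually_lt_const hεqpos))
    filter_upwards [ht.eventually hEt, eventually_gt_atTop (0 : ℝ)] with u hu hupos
    obtain ⟨hratio, hq0t, hq0small⟩ := hu
    set t : ℝ := log u / a with ht_def
    -- per-n bounds
    have hqle : ∀ i : ℕ, 1 ≤ i → q i t ≤ (M + 1) * q 0 t := by
      intro i hi
      have h := hratio i hi
      have h2 : q i t / q 0 t < c i + ε1 := by
        have := abs_lt.1 h
        linarith [this.2]
      have h3 : q i t / q 0 t ≤ M + 1 := by
        have := hcM i hi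
        linarith
      calc q i t = q i t / q 0 t * q 0 t := by field_simp
        _ ≤ (M + 1) * q 0 t := mul_le_mul_of_nonneg_right h3 (hqnn 0 t)
    have hkey : ∀ n : ℕ,
        |(1 - ∏ i ∈ Finset.Icc 1 n, (1 - q i t)) / q 0 t - C n|
          ≤ n * ε1 + (n : ℝ) ^ 2 * (M + 1) ^ 2 * q 0 t := by
      intro n
      set S : ℝ := ∑ i ∈ Finset.Icc 1 n, q i t with hS_def
      set A : ℝ := 1 - ∏ i ∈ Finset.Icc 1 n, (1 - q i t) with hA_def
      have hmem : ∀ i ∈ Finset.Icc 1 n, 1 ≤ i := fun i hi => (Finset.mem_Icc.1 hi).1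
      have hS0 : 0 ≤ S := Finset.sum_nonneg fun i _ => hqnn i t
      have hSle : S ≤ (M + 1) * q 0 t * n := by
        calc S ≤ ∑ i ∈ Finset.Icc 1 n, (M + 1) * q 0 t :=
              Finset.sum_le_sum fun i hi => hqle i (hmem i hi)
          _ = (M + 1) * q 0 t * n := by
              rw [Finset.sum_const, Nat.card_Icc]
              simp [mul_comm]
      have hAub : A ≤ S := by
        have := aux_one_sub_sum_le_prod (Finset.Icc 1 n) (fun i => q i t)
          (fun i _ => hqnn i t) (fun i _ => hq1 i t)
        rw [hA_def]; linarith
      have hAlb : S - S ^ 2 ≤ A := by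
        have := aux_prod_le_one_sub_sum_add_sq (Finset.Icc 1 n) (fun i => q i t)
          (fun i _ => hqnn i t) (fun i _ => hq1 i t)
        rw [hA_def]; linarith
      have hterm1 : |S / q 0 t - C n| ≤ n * ε1 := by
        rw [hS_def, hC_def, Finset.sum_div, ← Finset.sum_sub_distrib]
        calc |∑ i ∈ Finset.Icc 1 n, (q i t / q 0 t - c i)|
            ≤ ∑ i ∈ Finset.Icc 1 n, |q i t / q 0 t - c i| :=
              Finset.abs_sum_le_sum_abs _ _
          _ ≤ ∑ i ∈ Finset.Icc 1 n, ε1 :=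
              Finset.sum_le_sum fun i hi => (hratio i (hmem i hi)).le
          _ = n * ε1 := by rw [Finset.sum_const, Nat.card_Icc]; simp [mul_comm]
      have hterm2 : |A / q 0 t - S / q 0 t| ≤ (n : ℝ) ^ 2 * (M + 1) ^ 2 * q 0 t := by
        rw [div_sub_div_same, abs_div, abs_of_pos hq0t]
        rw [div_le_iff₀ hq0t]
        have h1 : |A - S| ≤ S ^ 2 := abs_le.2 ⟨by linarith, by nlinarith⟩
        have h2 : S ^ 2 ≤ ((M + 1) * q 0 t * n) ^ 2 := by nlinarith
        calc |A - S| ≤ S ^ 2 := h1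
          _ ≤ ((M + 1) * q 0 t * n) ^ 2 := h2
          _ = (n : ℝ) ^ 2 * (M + 1) ^ 2 * q 0 t * q 0 t := by ring
      calc |A / q 0 t - C n| ≤ |A / q 0 t - S / q 0 t| + |S / q 0 t - C n| := by
            have := abs_sub_le (A / q 0 t) (S / q 0 t) (C n)
            linarith
        _ ≤ (n : ℝ) ^ 2 * (M + 1) ^ 2 * q 0 t + n * ε1 := add_le_add hterm2 hterm1
        _ = n * ε1 + (n : ℝ) ^ 2 * (M + 1) ^ 2 * q 0 t := by ring
    -- summability facts
    have hAnn : ∀ n : ℕ, 0 ≤ 1 - ∏ i ∈ Finset.Icc 1 n, (1 - q i t) := by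
      intro n
      have := (aux_prod_nonneg_le_one (Finset.Icc 1 n) (fun i => q i t)
        (fun i _ => hqnn i t) (fun i _ => hq1 i t)).2
      linarith
    have hB : Summable (fun n => w n * ((n : ℝ) * ε1 + (n : ℝ) ^ 2 * (M + 1) ^ 2 * q 0 t)) := by
      have h1 := hsumN.mul_right ε1
      have h2 := hsumN2.mul_right ((M + 1) ^ 2 * q 0 t)
      refine (h1.add h2).congr fun n => ?_
      ring
    have hAle : ∀ n : ℕ, 1 - ∏ i ∈ Finset.Icc 1 n, (1 - q i t)
        ≤ (M + 1) * q 0 t * n := by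
      intro n
      have h1 := aux_one_sub_sum_le_prod (Finset.Icc 1 n) (fun i => q i t)
        (fun i _ => hqnn i t) (fun i _ => hq1 i t)
      have h2 : ∑ i ∈ Finset.Icc 1 n, q i t ≤ (M + 1) * q 0 t * n := by
        calc ∑ i ∈ Finset.Icc 1 n, q i t ≤ ∑ i ∈ Finset.Icc 1 n, (M + 1) * q 0 t :=
              Finset.sum_le_sum fun i hi => hqle i (Finset.mem_Icc.1 hi).1
          _ = (M + 1) * q 0 t * n := by
              rw [Finset.sum_const, Nat.card_Icc]
              simp [mul_comm]
      linarith
    have hsum1 : Summable (fun n => w n *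
        ((1 - ∏ i ∈ Finset.Icc 1 n, (1 - q i t)) / q 0 t)) := by
      refine Summable.of_nonneg_of_le (fun n => ?_) (fun n => ?_)
        (hsumN.mul_right ((M + 1)))
      · have := hAnn n
        have := hqnn 0 t
        positivity
      · calc w n * ((1 - ∏ i ∈ Finset.Icc 1 n, (1 - q i t)) / q 0 t)
            ≤ w n * ((M + 1) * n) := by
              refine mul_le_mul_of_nonneg_left ?_ (hw0 n)
              rw [div_le_iff₀ hq0t]
              calc 1 - ∏ i ∈ Finset.Icc 1 n, (1 - q i t) ≤ (M + 1) * q 0 t * n := hAle n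
                _ = (M + 1) * n * q 0 t := by ring
          _ = w n * n * (M + 1) := by ring
    have hsumC' : Summable (fun n => w n * C n) := hsumC
    -- rewrite the distance
    rw [Real.dist_eq, hFeq u hupos, hp0eq u hupos, ← ht_def]
    have htsum_div : (∑' n, w n * (1 - ∏ i ∈ Finset.Icc 1 n, (1 - q i t))) / q 0 t
        = ∑' n, w n * ((1 - ∏ i ∈ Finset.Icc 1 n, (1 - q i t)) / q 0 t) := by
      rw [← tsum_div_const]
      exact tsum_congr fun n => by rw [mul_div_assoc]
    rw [htsum_div, hΘeq]
    have hdiff : ∑' n, w n * ((1 - ∏ i ∈ Finset.Icc 1 n, (1 - q i t)) / q 0 t)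
        - ∑' n, w n * C n
        = ∑' n, w n * ((1 - ∏ i ∈ Finset.Icc 1 n, (1 - q i t)) / q 0 t - C n) := by
      rw [← Summable.tsum_sub hsum1 hsumC']
      exact tsum_congr fun n => by ring
    rw [hdiff]
    have hle : ∀ n : ℕ, |w n * ((1 - ∏ i ∈ Finset.Icc 1 n, (1 - q i t)) / q 0 t - C n)|
        ≤ w n * ((n : ℝ) * ε1 + (n : ℝ) ^ 2 * (M + 1) ^ 2 * q 0 t) := by
      intro n
      rw [abs_mul, abs_of_nonneg (hw0 n)]
      exact mul_le_mul_of_nonneg_left (hkey n) (hw0 n)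
    have hsumabs : Summable
        (fun n => |w n * ((1 - ∏ i ∈ Finset.Icc 1 n, (1 - q i t)) / q 0 t - C n)|) :=
      Summable.of_nonneg_of_le (fun n => abs_nonneg _) hle hB
    have habs : |∑' n, w n * ((1 - ∏ i ∈ Finset.Icc 1 n, (1 - q i t)) / q 0 t - C n)|
        ≤ ∑' n, w n * ((n : ℝ) * ε1 + (n : ℝ) ^ 2 * (M + 1) ^ 2 * q 0 t) := by
      calc |∑' n, w n * ((1 - ∏ i ∈ Finset.Icc 1 n, (1 - q i t)) / q 0 t - C n)|
          ≤ ∑' n, |w n * ((1 - ∏ i ∈ Finset.Icc 1 n, (1 - q i t)) / q 0 t - C n)| := by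
            have hn := norm_tsum_le_tsum_norm (f := fun n =>
              w n * ((1 - ∏ i ∈ Finset.Icc 1 n, (1 - q i t)) / q 0 t - C n))
              (hsumabs.congr fun n => (Real.norm_eq_abs _).symm)
            calc |∑' n, w n * ((1 - ∏ i ∈ Finset.Icc 1 n, (1 - q i t)) / q 0 t - C n)|
                = ‖∑' n, w n * ((1 - ∏ i ∈ Finset.Icc 1 n, (1 - q i t)) / q 0 t - C n)‖ :=
                  (Real.norm_eq_abs _).symm
              _ ≤ ∑' n, ‖w n * ((1 - ∏ i ∈ Finset.Icc 1 n, (1 - q i t)) / q 0 t - C n)‖ := hn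
              _ = ∑' n, |w n * ((1 - ∏ i ∈ Finset.Icc 1 n, (1 - q i t)) / q 0 t - C n)| :=
                  tsum_congr fun n => Real.norm_eq_abs _
        _ ≤ ∑' n, w n * ((n : ℝ) * ε1 + (n : ℝ) ^ 2 * (M + 1) ^ 2 * q 0 t) :=
            Summable.tsum_le_tsum hle hsumabs hB
    have hsplit : ∑' n, w n * ((n : ℝ) * ε1 + (n : ℝ) ^ 2 * (M + 1) ^ 2 * q 0 t)
        = ε1 * KN + ((M + 1) ^ 2 * q 0 t) * K2 := by
      have : ε1 * KN + ((M + 1) ^ 2 * q 0 t) * K2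
          = ∑' n, w n * ((n : ℝ) * ε1 + (n : ℝ) ^ 2 * (M + 1) ^ 2 * q 0 t) := by
        rw [hKN_def, hK2_def, ← tsum_mul_left, ← tsum_mul_left,
          ← Summable.tsum_add (hsumN.mul_left ε1) (hsumN2.mul_left ((M + 1) ^ 2 * q 0 t))]
        exact tsum_congr fun n => by ring
      exact this.symm
    have hMpos : (0 : ℝ) < M + 1 := by linarith
    have h1 : ε1 * KN ≤ ε / 2 := by
      calc ε1 * KN ≤ ε / (2 * (KN + 1)) * KN := mul_le_mul_of_nonneg_right hε1le hKN0
        _ ≤ ε / (2 * (KN + 1)) * (KN + 1) := by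
            refine mul_le_mul_of_nonneg_left (by linarith) (by positivity)
        _ = ε / 2 := by
            field_simp
    have h2 : ((M + 1) ^ 2 * q 0 t) * K2 < ε / 2 := by
      have hc1 : ((M + 1) ^ 2 * q 0 t) * K2 ≤ ((M + 1) ^ 2 * (K2 + 1)) * q 0 t := by
        nlinarith [hqnn 0 t, sq_nonneg (M + 1)]
      have hcoef : (0 : ℝ) < (M + 1) ^ 2 * (K2 + 1) := by positivity
      have hc2 : ((M + 1) ^ 2 * (K2 + 1)) * q 0 t < ((M + 1) ^ 2 * (K2 + 1)) * εq :=
        mul_lt_mul_of_pos_left hq0small hcoef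
      have hc3 : ((M + 1) ^ 2 * (K2 + 1)) * εq = ε / 2 := by
        rw [hεq_def, mul_div_assoc']
        rw [div_eq_div_iff (by positivity) (by norm_num)]
        ring
      linarith
    calc |∑' n, w n * ((1 - ∏ i ∈ Finset.Icc 1 n, (1 - q i t)) / q 0 t - C n)|
        ≤ ε1 * KN + ((M + 1) ^ 2 * q 0 t) * K2 := by rw [← hsplit]; exact habs
      _ < ε := by linarith
  -- conclude
  have hdiveq : (fun u => (P {ω | u < ⨆ i ∈ Finset.Icc 1 (N ω),
      exp (a * Z i ω)}).toReal / (Θ * (P {ω | u < exp (a * Z 0 ω)}).toReal))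
      = fun u => ((P {ω | u < ⨆ i ∈ Finset.Icc 1 (N ω),
        exp (a * Z i ω)}).toReal / (P {ω | u < exp (a * Z 0 ω)}).toReal) / Θ := by
    funext u
    rw [div_div, mul_comm]
  rw [AsymEquiv, hdiveq]
  have := hmain.div_const Θ
  rwa [div_self hΘpos.ne'] at this
end
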